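/- arXiv:1507.03520 — 7 statements merged into one kernel-verified Lean document; each statement's English description precedes it below -/
import Mathlib

section
/- If n is odd and the pattern (m_1,...,m_T) has the form (2^k s_1, ..., 2^k s_T) where k ≥ 1, each s_i is a positive integer, every m_i is even, k is the largest power of 2 dividing all m_i, and s_1 + s_2 + ... + s_T is odd, then (m_1,...,m_T) is NOT in the Borda range for n voters. -/
/-- The Borda score of alternative `x` under profile `u`, where each voter's
strict linear order is encoded as a ranking bijection (`u i x = k` means `x`
is in position `k+1`, top = position 1). -/
def bordaScore {m n : ℕ} (u : Fin n → (Fin m ≃ Fin m)) (x : Fin m) : ℕ :=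
  ∑ i, ((u i x : ℕ) + 1)

/-- The pattern `p = [m₁, ..., m_T]` is in the Borda range for `n` voters:
some `n`-voter profile of strict linear orders on `p.sum` alternatives has
Borda-score equivalence classes of exactly these cardinalities, ordered by
increasing score. -/
def InBordaRange (n : ℕ) (p : List ℕ) : Prop :=
  ∃ u : Fin n → (Fin p.sum ≃ Fin p.sum), ∃ scores : Fin p.length → ℕ,
    StrictMono scores ∧
    (∀ x, ∃ j, bordaScore u x = scores j) ∧
    ∀ j : Fin p.length,
      (Finset.univ.filter (fun x => bordaScore u x = scores j)).card = p.get j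

lemma gauss_aux (m : ℕ) : 2 * ∑ r ∈ Finset.range m, (r + 1) = m * (m + 1) := by
  induction m with
  | zero => simp
  | succ m ih => rw [Finset.sum_range_succ, mul_add, ih]; ring

lemma sum_map_const_mul (c : ℕ) (l : List ℕ) :
    (l.map (fun x => c * x)).sum = c * l.sum := by
  induction l with
  | nil => simp
  | cons a t ih => simp [ih, mul_add]

theorem stmt7 (n : ℕ) (hn : Odd n) (k : ℕ) (hk : 1 ≤ k) (s : List ℕ)
    (hpos : ∀ si ∈ s, 0 < si)
    (hmax : ∃ si ∈ s, Odd si)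
    (hsum : Odd s.sum) :
    ¬ InBordaRange n (s.map (fun si => 2 ^ k * si)) := by
  intro hIB
  set p : List ℕ := s.map (fun si => 2 ^ k * si) with hp
  obtain ⟨u, scores, hmono, hcover, hcard⟩ := hIB
  set T : ℕ := ∑ x : Fin p.sum, bordaScore u x with hT
  -- sum by classes
  have hclass : T = ∑ j : Fin p.length, scores j * p.get j := by
    choose g hg using hcover
    rw [hT, ← Finset.sum_fiberwise Finset.univ g (bordaScore u)]
    refine Finset.sum_congr rfl fun j _ => ?_
    have hfil : Finset.univ.filter (fun x => g x = j)
        = Finset.univ.filter (fun x => bordaScore u x = scores j) := by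
      ext x
      simp only [Finset.mem_filter, Finset.mem_univ, true_and]
      constructor
      · rintro rfl; exact hg x
      · intro h; exact hmono.injective (by rw [← hg x, h])
    rw [hfil, Finset.sum_congr rfl (fun x hx => (Finset.mem_filter.mp hx).2),
      Finset.sum_const, hcard j, smul_eq_mul, mul_comm]
  -- sum by voters
  have hrhs : T = n * ∑ x : Fin p.sum, ((x : ℕ) + 1) := by
    rw [hT]
    simp only [bordaScore]
    rw [Finset.sum_comm]
    rw [Finset.sum_congr rfl
      (fun i _ => Equiv.sum_comp (u i) (fun y : Fin p.sum => (y : ℕ) + 1)),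
      Finset.sum_const, Finset.card_univ, Fintype.card_fin, smul_eq_mul]
  have hC : 2 * ∑ x : Fin p.sum, ((x : ℕ) + 1) = p.sum * (p.sum + 1) := by
    rw [Fin.sum_univ_eq_sum_range (fun r => r + 1) p.sum]
    exact gauss_aux p.sum
  have hS : p.sum = 2 ^ k * s.sum := sum_map_const_mul (2 ^ k) s
  -- divisibility
  have hdvdT : 2 ^ k ∣ T := by
    rw [hclass]
    refine Finset.dvd_sum fun j _ => dvd_mul_of_dvd_right ?_ _
    have hmem : p.get j ∈ p := p.get_mem j
    obtain ⟨si, _, hsi⟩ := List.mem_map.mp hmem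
    exact hsi ▸ dvd_mul_right _ _
  obtain ⟨Q, hQ⟩ := hdvdT
  have key : 2 * T = n * (p.sum * (p.sum + 1)) := by
    rw [hrhs, mul_left_comm, hC]
  have h1 : 2 ^ k * (2 * Q) = n * (2 ^ k * s.sum * (2 ^ k * s.sum + 1)) := by
    rw [show 2 ^ k * (2 * Q) = 2 * (2 ^ k * Q) by ring, ← hQ, key, hS]
  have h2 : n * (2 ^ k * s.sum * (2 ^ k * s.sum + 1))
      = 2 ^ k * (n * (s.sum * (2 ^ k * s.sum + 1))) := by ring
  have h3 : 2 * Q = n * (s.sum * (2 ^ k * s.sum + 1)) :=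
    Nat.eq_of_mul_eq_mul_left (pow_pos two_pos k) (h1.trans h2)
  have hoddfac : Odd (2 ^ k * s.sum + 1) := by
    refine Even.add_one ?_
    exact (Nat.even_pow.mpr ⟨even_two, by omega⟩).mul_right _
  have hodd : Odd (n * (s.sum * (2 ^ k * s.sum + 1))) := hn.mul (hsum.mul hoddfac)
  have heven : Even (2 * Q) := even_two_mul Q
  rw [h3] at heven
  exact (Nat.not_even_iff_odd.mpr hodd) heven
end

section
/- Let n ≥ 3 be odd and let (m_1, m_2) = (2s_1, 2s_2) where s_1 and s_2 are both odd positive integers. Then there exists an n-voter profile of strict linear orders on a set of 2s_1 + 2s_2 alternatives whose Borda ranking has exactly two levels with cardinalities m_1 and m_2. -/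
namespace Stmt8Aux

/-- second voter -/
def qf (d x : ℕ) : ℕ := if x < 2*d then x + 2*d else if x < 4*d - 1 then x + 1 - 2*d else 0

/-- sum of first two voters -/
def gf (d x : ℕ) : ℕ := x + qf d x

def bf (c d x : ℕ) : ℕ := c + 6*d - 2 - gf d x

/-- class condition -/
def cond (c d x : ℕ) : Prop := bf c d x % d + 2 ≤ c ∨ bf c d x = c + d - 1 ∨ x = 4*d - 1

instance (c d x : ℕ) : Decidable (cond c d x) := by unfold cond; infer_instance

def tf (c d x : ℕ) : ℕ := if cond c d x then 1 else 0

/-- third voter -/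
def rf (c d x : ℕ) : ℕ := bf c d x - d * tf c d x

lemma qf_lt (hd : 1 ≤ d) (hx : x < 4*d) : qf d x < 4*d := by
  unfold qf; split_ifs <;> omega

lemma qf_inj (hd : 1 ≤ d) (h1 : x₁ < 4*d) (h2 : x₂ < 4*d)
    (h : qf d x₁ = qf d x₂) : x₁ = x₂ := by
  unfold qf at h; split_ifs at h <;> omega

lemma gf_bounds (hd : 1 ≤ d) (hx : x < 4*d) : 2*d ≤ gf d x ∧ gf d x ≤ 6*d - 2 := by
  unfold gf qf; split_ifs <;> omega

lemma bf_bounds (hc : 1 ≤ c) (hcd : c ≤ d) (hx : x < 4*d) :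
    c ≤ bf c d x ∧ bf c d x ≤ c + 4*d - 2 := by
  have := gf_bounds (d := d) (x := x) (by omega) hx
  unfold bf; omega

lemma gf_eq_cases (hd : 1 ≤ d) (h1 : x₁ < 4*d) (h2 : x₂ < 4*d)
    (h : gf d x₁ = gf d x₂) :
    x₁ = x₂ ∨ (x₁ = 3*d - 1 ∧ x₂ = 4*d - 1) ∨ (x₂ = 3*d - 1 ∧ x₁ = 4*d - 1) := by
  unfold gf qf at h; split_ifs at h <;> omega

lemma bf_last (hc : 1 ≤ c) (hcd : c ≤ d) : bf c d (4*d - 1) = c + 2*d - 1 := by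
  unfold bf gf qf
  have h1 : ¬ (4*d - 1 < 2*d) := by omega
  have h2 : ¬ (4*d - 1 < 4*d - 1) := by omega
  rw [if_neg h1, if_neg h2]; omega

lemma bf_3d (hc : 1 ≤ c) (hcd : c ≤ d) : bf c d (3*d - 1) = c + 2*d - 1 := by
  unfold bf gf qf
  have h1 : ¬ (3*d - 1 < 2*d) := by omega
  have h2 : (3*d - 1 < 4*d - 1) := by omega
  rw [if_neg h1, if_pos h2]; omega

lemma mod_cd1 (hc : 1 ≤ c) (hcd : c ≤ d) : (c + d - 1) % d = c - 1 := by
  have h : c + d - 1 = (c - 1) + d := by omega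
  rw [h, Nat.add_mod_right, Nat.mod_eq_of_lt (by omega)]

lemma mod_cd2 (hc : 1 ≤ c) (hcd : c ≤ d) : (c + 2*d - 1) % d = c - 1 := by
  have h : c + 2*d - 1 = (c - 1) + d + d := by omega
  rw [h, Nat.add_mod_right, Nat.add_mod_right, Nat.mod_eq_of_lt (by omega)]

lemma d_le_bf (hc : 1 ≤ c) (hcd : c ≤ d) (hx : x < 4*d) (h : cond c d x) :
    d ≤ bf c d x := by
  have hb := bf_bounds hc hcd hx
  rcases h with h | h | h
  · rcases Nat.lt_or_ge (bf c d x) d with hlt | hge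
    · rw [Nat.mod_eq_of_lt hlt] at h; omega
    · exact hge
  · omega
  · rw [h, bf_last hc hcd]; omega

lemma rf_of_cond (h : cond c d x) : rf c d x = bf c d x - d := by
  unfold rf tf; rw [if_pos h, mul_one]

lemma rf_of_not_cond (h : ¬ cond c d x) : rf c d x = bf c d x := by
  unfold rf tf; rw [if_neg h, mul_zero, Nat.sub_zero]

lemma not_cond_3d (hc : 1 ≤ c) (hcd : c ≤ d) : ¬ cond c d (3*d - 1) := by
  unfold cond
  rw [bf_3d hc hcd, mod_cd2 hc hcd]
  push_neg
  refine ⟨by omega, by omega, by omega⟩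

lemma cond_last (hc : 1 ≤ c) (hcd : c ≤ d) : cond c d (4*d - 1) := by
  unfold cond; right; right; rfl

lemma rf_lt (hc : 1 ≤ c) (hcd : c ≤ d) (hx : x < 4*d) : rf c d x < 4*d := by
  have hb := bf_bounds hc hcd hx
  by_cases h : cond c d x
  · rw [rf_of_cond h]
    have := d_le_bf hc hcd hx h
    omega
  · rw [rf_of_not_cond h]
    by_contra hge
    push_neg at hge
    have hrw : (bf c d x - 4*d) + 4*d = bf c d x := by omega
    have hmod : bf c d x % d = bf c d x - 4*d := by
      calc bf c d x % d = ((bf c d x - 4*d) + 4*d) % d := by rw [hrw]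
        _ = (bf c d x - 4*d) % d := by rw [Nat.add_mul_mod_self_right]
        _ = bf c d x - 4*d := Nat.mod_eq_of_lt (by omega)
    exact h (Or.inl (by omega))

lemma rf_inj_aux (hc : 1 ≤ c) (hcd : c ≤ d) (h1 : x₁ < 4*d) (h2 : x₂ < 4*d)
    (t1 : cond c d x₁) (t2 : ¬ cond c d x₂) (h : rf c d x₁ = rf c d x₂) : False := by
  have hb1 := bf_bounds hc hcd h1
  have hb2 := bf_bounds hc hcd h2
  have hd1 := d_le_bf hc hcd h1 t1
  rw [rf_of_cond t1, rf_of_not_cond t2] at h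
  have heq : bf c d x₁ = bf c d x₂ + d := by omega
  unfold cond at t2; push_neg at t2
  rcases t1 with ha | ha | ha
  · rw [heq, Nat.add_mod_right] at ha
    exact absurd ha (by omega)
  · omega
  · rw [ha, bf_last hc hcd] at heq
    exact t2.2.1 (by omega)

lemma rf_inj (hc : 1 ≤ c) (hcd : c ≤ d) (h1 : x₁ < 4*d) (h2 : x₂ < 4*d)
    (h : rf c d x₁ = rf c d x₂) : x₁ = x₂ := by
  have hb1 := bf_bounds hc hcd h1
  have hb2 := bf_bounds hc hcd h2
  by_cases t1 : cond c d x₁ <;> by_cases t2 : cond c d x₂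
  · -- both class 1
    have hd1 := d_le_bf hc hcd h1 t1
    have hd2 := d_le_bf hc hcd h2 t2
    rw [rf_of_cond t1, rf_of_cond t2] at h
    have hbeq : bf c d x₁ = bf c d x₂ := by omega
    have hgeq : gf d x₁ = gf d x₂ := by
      have g1 := gf_bounds (d := d) (x := x₁) (by omega) h1
      have g2 := gf_bounds (d := d) (x := x₂) (by omega) h2
      unfold bf at hbeq; omega
    rcases gf_eq_cases (by omega) h1 h2 hgeq with he | ⟨ha, hb⟩ | ⟨ha, hb⟩
    · exact he
    · exact absurd (ha ▸ t1) (not_cond_3d hc hcd)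
    · exact absurd (ha ▸ t2) (not_cond_3d hc hcd)
  · exact absurd (rf_inj_aux hc hcd h1 h2 t1 t2 h) (by simp)
  · exact absurd (rf_inj_aux hc hcd h2 h1 t2 t1 h.symm) (by simp)
  · -- both class 2
    rw [rf_of_not_cond t1, rf_of_not_cond t2] at h
    have hgeq : gf d x₁ = gf d x₂ := by
      have g1 := gf_bounds (d := d) (x := x₁) (by omega) h1
      have g2 := gf_bounds (d := d) (x := x₂) (by omega) h2
      unfold bf at h; omega
    rcases gf_eq_cases (by omega) h1 h2 hgeq with he | ⟨ha, hb⟩ | ⟨ha, hb⟩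
    · exact he
    · exact absurd (hb ▸ cond_last hc hcd) t2
    · exact absurd (hb ▸ cond_last hc hcd) t1

lemma score_cases (hc : 1 ≤ c) (hcd : c ≤ d) (hx : x < 4*d) :
    (gf d x + rf c d x = c + 5*d - 2 ∧ cond c d x) ∨
    (gf d x + rf c d x = c + 6*d - 2 ∧ ¬ cond c d x) := by
  have hg := gf_bounds (d := d) (x := x) (by omega) hx
  by_cases h : cond c d x
  · left
    refine ⟨?_, h⟩
    have := d_le_bf hc hcd hx h
    rw [rf_of_cond h]
    unfold bf at *; omega
  · right
    refine ⟨?_, h⟩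
    rw [rf_of_not_cond h]
    unfold bf; omega

/-- the full voter list: Q, R, id, then alternating id/reverse pairs -/
def voters {N : ℕ} (Q R : Fin N ≃ Fin N) (j : ℕ) : Fin N ≃ Fin N :=
  if j = 0 then Q else if j = 1 then R else if j = 2 then Equiv.refl _
    else if j % 2 = 1 then Equiv.refl _ else Fin.revPerm

lemma voters_big_odd {N : ℕ} (Q R : Fin N ≃ Fin N) {j : ℕ} (h3 : 3 ≤ j)
    (hodd : j % 2 = 1) : voters Q R j = Equiv.refl _ := by
  unfold voters
  rw [if_neg (by omega), if_neg (by omega), if_neg (by omega), if_pos hodd]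

lemma voters_big_even {N : ℕ} (Q R : Fin N ≃ Fin N) {j : ℕ} (h3 : 3 ≤ j)
    (heven : j % 2 = 0) : voters Q R j = Fin.revPerm := by
  unfold voters
  rw [if_neg (by omega), if_neg (by omega), if_neg (by omega), if_neg (by omega)]

lemma sum_voters {N : ℕ} (Q R : Fin N ≃ Fin N) (x : Fin N) (k : ℕ) :
    ∑ j ∈ Finset.range (2*k+3), (((voters Q R j) x : ℕ) + 1) =
      (((Q x : ℕ) + 1) + ((R x : ℕ) + 1) + ((x : ℕ) + 1)) + k*(N+1) := by
  induction k with
  | zero =>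
      rw [show 2*0+3 = 3 from rfl, Finset.sum_range_succ, Finset.sum_range_succ,
        Finset.sum_range_succ, Finset.sum_range_zero]
      simp [voters]
  | succ k ih =>
      rw [show 2*(k+1)+3 = (2*k+3)+1+1 by ring, Finset.sum_range_succ,
        Finset.sum_range_succ, ih, voters_big_odd Q R (by omega) (by omega),
        voters_big_even Q R (by omega) (by omega)]
      have hx := x.2
      simp only [Equiv.refl_apply, Fin.revPerm_apply, Fin.val_rev]
      ring_nf
      omega

end Stmt8Aux

theorem stmt8 (n : ℕ) (hn : Odd n) (hn3 : 3 ≤ n) (s₁ s₂ : ℕ)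
    (h₁ : Odd s₁) (h₂ : Odd s₂) (hp₁ : 0 < s₁) (hp₂ : 0 < s₂) :
    InBordaRange n [2 * s₁, 2 * s₂] := by
  classical
  obtain ⟨a₁, hs₁⟩ := h₁
  obtain ⟨b₁, hs₂⟩ := h₂
  obtain ⟨kk, hkk⟩ : ∃ k, n = 2*k + 3 := by
    obtain ⟨t, ht⟩ := hn; exact ⟨t - 1, by omega⟩
  set c : ℕ := a₁ + 1 with hcdef
  set d : ℕ := a₁ + b₁ + 1 with hddef
  have hc : 1 ≤ c := by omega
  have hcd : c ≤ d := by omega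
  have hd1 : 1 ≤ d := by omega
  have hsum : ([2 * s₁, 2 * s₂] : List ℕ).sum = 4*d := by
    simp [List.sum_cons]; omega
  unfold InBordaRange
  rw [hsum]
  -- the two special permutations
  have hQinj : Function.Injective
      (fun x : Fin (4*d) => (⟨Stmt8Aux.qf d x.1, Stmt8Aux.qf_lt hd1 x.2⟩ : Fin (4*d))) := by
    intro a b hab
    exact Fin.ext (Stmt8Aux.qf_inj hd1 a.2 b.2 (by simpa using congrArg Fin.val hab))
  have hRinj : Function.Injective
      (fun x : Fin (4*d) => (⟨Stmt8Aux.rf c d x.1, Stmt8Aux.rf_lt hc hcd x.2⟩ : Fin (4*d))) := by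
    intro a b hab
    exact Fin.ext (Stmt8Aux.rf_inj hc hcd a.2 b.2 (by simpa using congrArg Fin.val hab))
  set Q : Fin (4*d) ≃ Fin (4*d) :=
    Equiv.ofBijective _ (Finite.injective_iff_bijective.mp hQinj) with hQdef
  set R : Fin (4*d) ≃ Fin (4*d) :=
    Equiv.ofBijective _ (Finite.injective_iff_bijective.mp hRinj) with hRdef
  have hQval : ∀ x : Fin (4*d), ((Q x : Fin (4*d)) : ℕ) = Stmt8Aux.qf d x.1 := fun _ => rfl
  have hRval : ∀ x : Fin (4*d), ((R x : Fin (4*d)) : ℕ) = Stmt8Aux.rf c d x.1 := fun _ => rfl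
  set u : Fin n → (Fin (4*d) ≃ Fin (4*d)) := fun i => Stmt8Aux.voters Q R i.1 with hudef
  set w₁ : ℕ := kk*(4*d+1) + (c+5*d+1) with hw1def
  set w₂ : ℕ := kk*(4*d+1) + (c+5*d+1) + d with hw2def
  -- score formula
  have hscore : ∀ x : Fin (4*d),
      bordaScore u x = (Stmt8Aux.gf d x.1 + Stmt8Aux.rf c d x.1) + 3 + kk*(4*d+1) := by
    intro x
    unfold bordaScore
    have h1 : ∑ i : Fin n, ((u i x : ℕ) + 1)
        = ∑ j ∈ Finset.range n, (((Stmt8Aux.voters Q R j) x : ℕ) + 1) :=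
      Fin.sum_univ_eq_sum_range (fun j => (((Stmt8Aux.voters Q R j) x : ℕ) + 1)) n
    rw [h1, hkk, Stmt8Aux.sum_voters Q R x kk, hQval, hRval]
    unfold Stmt8Aux.gf
    ring
  have hcover : ∀ x : Fin (4*d), bordaScore u x = w₁ ∨ bordaScore u x = w₂ := by
    intro x
    rcases Stmt8Aux.score_cases hc hcd x.2 with ⟨h, _⟩ | ⟨h, _⟩
    · left; rw [hscore x, h]; omega
    · right; rw [hscore x, h]; omega
  have hw12 : w₁ ≠ w₂ := by omega
  -- counting
  set A : Finset (Fin (4*d)) := Finset.univ.filter (fun x => bordaScore u x = w₁) with hAdef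
  set B : Finset (Fin (4*d)) := Finset.univ.filter (fun x => bordaScore u x = w₂) with hBdef
  have hfilterB : Finset.univ.filter (fun x => ¬ (bordaScore u x = w₁)) = B := by
    rw [hBdef]
    apply Finset.filter_congr
    intro x _
    rcases hcover x with h | h <;> simp [h] <;> omega
  have hcards : A.card + B.card = 4*d := by
    have h := Finset.card_filter_add_card_filter_not
      (s := (Finset.univ : Finset (Fin (4*d)))) (p := fun x => bordaScore u x = w₁)
    rw [hfilterB] at h
    simpa using h
  set SS : ℕ := ∑ x : Fin (4*d), (x : ℕ) with hSSdef
  have hT : ∑ x : Fin (4*d), bordaScore u x = (4*d) * (3 + kk*(4*d+1)) + 3 * SS := by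
    have hpt : ∀ x : Fin (4*d), bordaScore u x
        = ((x : ℕ) + ((Q x : Fin (4*d)) : ℕ) + ((R x : Fin (4*d)) : ℕ)) + (3 + kk*(4*d+1)) := by
      intro x
      rw [hscore x, hQval, hRval]
      unfold Stmt8Aux.gf
      ring
    rw [Finset.sum_congr rfl (fun x _ => hpt x), Finset.sum_add_distrib,
      Finset.sum_add_distrib, Finset.sum_add_distrib, Finset.sum_const]
    have hQs : ∑ x : Fin (4*d), ((Q x : Fin (4*d)) : ℕ) = SS :=
      Equiv.sum_comp Q (fun z : Fin (4*d) => (z : ℕ))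
    have hRs : ∑ x : Fin (4*d), ((R x : Fin (4*d)) : ℕ) = SS :=
      Equiv.sum_comp R (fun z : Fin (4*d) => (z : ℕ))
    rw [hQs, hRs]
    simp only [Finset.card_univ, Fintype.card_fin, smul_eq_mul, ← hSSdef]
    ring
  have hSS2 : 2 * SS = (4*d) * (4*d - 1) := by
    rw [hSSdef, Fin.sum_univ_eq_sum_range (fun j => j) (4*d), mul_comm,
      Finset.sum_range_id_mul_two]
  have hsplit : A.card * w₁ + B.card * w₂ = ∑ x : Fin (4*d), bordaScore u x := by
    rw [← Finset.sum_filter_add_sum_filter_not Finset.univ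
      (fun x => bordaScore u x = w₁) (bordaScore u), hfilterB]
    have hA : ∑ x ∈ A, bordaScore u x = A.card * w₁ := by
      rw [Finset.sum_congr rfl (fun x hx => (Finset.mem_filter.mp hx).2),
        Finset.sum_const, smul_eq_mul]
    have hB : ∑ x ∈ B, bordaScore u x = B.card * w₂ := by
      rw [Finset.sum_congr rfl (fun x hx => (Finset.mem_filter.mp hx).2),
        Finset.sum_const, smul_eq_mul]
    rw [hA, hB]
  have hBcard : B.card = 2 * s₂ := by
    have e1 : ((A.card : ℤ)) + B.card = 4*d := by exact_mod_cast hcards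
    have e2 : (A.card : ℤ) * w₁ + B.card * w₂ = (4*d) * (3 + kk*(4*d+1)) + 3 * SS := by
      exact_mod_cast hsplit.trans hT
    have e3 : 2 * (SS : ℤ) = (4*d) * (4*d - 1) := by
      have h41 : (1:ℕ) ≤ 4*d := by omega
      zify [h41] at hSS2
      exact hSS2
    have hW1 : (w₁ : ℤ) = kk*(4*d+1) + (c+5*d+1) := by rw [hw1def]; push_cast; ring
    have hW2 : (w₂ : ℤ) = kk*(4*d+1) + (c+5*d+1) + d := by rw [hw2def]; push_cast; ring
    have hs2z : (s₂ : ℤ) = 2*(d:ℤ) - 2*c + 1 := by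
      rw [hs₂, hcdef, hddef]; push_cast; ring
    have key : (B.card : ℤ) * (2*(d:ℤ)) = (2*(s₂:ℤ)) * (2*(d:ℤ)) := by
      rw [hW1] at e2
      rw [hW2] at e2
      linear_combination 2*e2 - 2*((kk:ℤ)*(4*(d:ℤ)+1) + ((c:ℤ)+5*(d:ℤ)+1))*e1 + 3*e3
        - 4*(d:ℤ)*hs2z
    have hd0 : (2*(d:ℤ)) ≠ 0 := by positivity
    have : (B.card : ℤ) = 2*(s₂:ℤ) := mul_right_cancel₀ hd0 key
    exact_mod_cast this
  have hAcard : A.card = 2 * s₁ := by omega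
  refine ⟨u, ![w₁, w₂], ?_, ?_, ?_⟩
  · intro i j hij
    fin_cases i <;> fin_cases j <;>
      simp_all [Matrix.cons_val_zero, Matrix.cons_val_one] <;> omega
  · intro x
    rcases hcover x with h | h
    · exact ⟨⟨0, by norm_num⟩, by simpa using h⟩
    · exact ⟨⟨1, by norm_num⟩, by simpa using h⟩
  · intro j
    fin_cases j
    · rw [hAdef] at hAcard
      convert hAcard using 3 <;> simp
    · simpa using hBcard
end

section
/- For every odd n ≥ 3 and every even T ≥ 2, the pattern (2,2,...,2) with T levels each of size 2 is in the Borda range for n voters; if T is odd, it is not in the Borda range for any odd n. -/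
open Finset in
/-- build a permutation of `Fin N` from a function/inverse pair on ℕ. -/
def permOfNat (N : ℕ) (f finv : ℕ → ℕ)
    (hf : ∀ x < N, f x < N) (hfi : ∀ x < N, finv x < N)
    (hl : ∀ x < N, finv (f x) = x) (hr : ∀ x < N, f (finv x) = x) : Fin N ≃ Fin N where
  toFun x := ⟨f x, hf x x.2⟩
  invFun x := ⟨finv x, hfi x x.2⟩
  left_inv x := Fin.ext (hl x x.2)
  right_inv x := Fin.ext (hr x x.2)

def e2 (N : ℕ) (h4 : N % 4 = 0) : Fin N ≃ Fin N :=
  permOfNat N (fun x => if x % 4 = 0 then x + 3 else x - 1)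
    (fun x => if x % 4 = 3 then x - 3 else x + 1)
    (fun x hx => by split_ifs <;> omega)
    (fun x hx => by split_ifs <;> omega)
    (fun x hx => by split_ifs <;> omega)
    (fun x hx => by split_ifs <;> omega)

def e3 (N : ℕ) (h4 : N % 4 = 0) : Fin N ≃ Fin N :=
  permOfNat N
    (fun x => if x % 4 = 0 then x + 1 else if x % 4 = 1 then x + 2 else
      if x % 4 = 2 then x else x - 3)
    (fun x => if x % 4 = 1 then x - 1 else if x % 4 = 3 then x - 2 else
      if x % 4 = 2 then x else x + 3)
    (fun x hx => by split_ifs <;> omega)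
    (fun x hx => by split_ifs <;> omega)
    (fun x hx => by split_ifs <;> omega)
    (fun x hx => by split_ifs <;> omega)

def revp (N : ℕ) : Fin N ≃ Fin N :=
  permOfNat N (fun x => N - 1 - x) (fun x => N - 1 - x)
    (fun x hx => by omega) (fun x hx => by omega)
    (fun x hx => by omega) (fun x hx => by omega)

def voter (N : ℕ) (h4 : N % 4 = 0) (k : ℕ) : Fin N ≃ Fin N :=
  if k = 0 then Equiv.refl _
  else if k = 1 then e2 N h4
  else if k = 2 then e3 N h4
  else if k % 2 = 1 then Equiv.refl _
  else revp N

lemma sum3 (N : ℕ) (h4 : N % 4 = 0) (x : Fin N) :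
    ∑ k ∈ Finset.range 3, ((voter N h4 k x : ℕ) + 1)
      = 7 + 12 * ((x : ℕ) / 4) + ((x : ℕ) % 4) / 2 := by
  rw [Finset.sum_range_succ, Finset.sum_range_succ, Finset.sum_range_one]
  have h0 : voter N h4 0 = Equiv.refl _ := by unfold voter; norm_num
  have h1 : voter N h4 1 = e2 N h4 := by unfold voter; norm_num
  have h2 : voter N h4 2 = e3 N h4 := by unfold voter; norm_num
  rw [h0, h1, h2]
  simp only [e2, e3, permOfNat, Equiv.coe_fn_mk, Equiv.refl_apply]
  have hx := x.2
  split_ifs <;> omega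

lemma sumRest (N : ℕ) (h4 : N % 4 = 0) (x : Fin N) (m : ℕ) :
    ∑ k ∈ Finset.Ico 3 (2 * m + 3), ((voter N h4 k x : ℕ) + 1) = m * (N + 1) := by
  induction m with
  | zero => simp
  | succ m ih =>
    have h1 : 2 * (m + 1) + 3 = (2 * m + 4) + 1 := by omega
    have e1 := Finset.sum_Ico_succ_top (show 3 ≤ 2 * m + 4 by omega)
      (fun k => ((voter N h4 k x : ℕ) + 1))
    have e2 := Finset.sum_Ico_succ_top (show 3 ≤ 2 * m + 3 by omega)
      (fun k => ((voter N h4 k x : ℕ) + 1))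
    rw [h1, e1, show 2 * m + 4 = (2 * m + 3) + 1 by omega, e2, ih]
    have ho : voter N h4 (2 * m + 3) = Equiv.refl _ := by
      unfold voter; split_ifs <;> first | rfl | omega | exact (‹False›).elim
    have he : voter N h4 ((2 * m + 3) + 1) = revp N := by
      unfold voter; split_ifs <;> first | rfl | omega | exact (‹False›).elim
    rw [ho, he]
    simp only [Equiv.refl_apply, revp, permOfNat, Equiv.coe_fn_mk]
    have hx := x.2
    have hstep : (m + 1) * (N + 1) = m * (N + 1) + (N + 1) := by ring
    rw [hstep]
    generalize m * (N + 1) = C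
    omega

lemma borda_eq (N : ℕ) (h4 : N % 4 = 0) (m : ℕ) (x : Fin N) :
    bordaScore (fun i : Fin (2 * m + 3) => voter N h4 i.val) x
      = m * (N + 1) + 7 + 12 * ((x : ℕ) / 4) + ((x : ℕ) % 4) / 2 := by
  unfold bordaScore
  rw [Fin.sum_univ_eq_sum_range (fun k => ((voter N h4 k x : ℕ) + 1)) (2 * m + 3)]
  rw [← Finset.sum_range_add_sum_Ico _ (show 3 ≤ 2 * m + 3 by omega)]
  rw [sum3 N h4 x, sumRest N h4 x m]
  ring

lemma exists_profile (m T : ℕ) (hT4 : (2 * T) % 4 = 0) :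
    ∃ u : Fin (2 * m + 3) → (Fin (2 * T) ≃ Fin (2 * T)), ∃ scores : Fin T → ℕ,
      StrictMono scores ∧
      (∀ x, ∃ j, bordaScore u x = scores j) ∧
      ∀ j : Fin T,
        (Finset.univ.filter (fun x => bordaScore u x = scores j)).card = 2 := by
  refine ⟨fun i => voter (2 * T) hT4 i.val,
    fun j => m * (2 * T + 1) + 7 + 12 * ((j : ℕ) / 2) + (j : ℕ) % 2, ?_, ?_, ?_⟩
  · intro j j' hlt
    beta_reduce
    have h : (j : ℕ) < (j' : ℕ) := hlt
    generalize m * (2 * T + 1) = C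
    omega
  · intro x
    have hx := x.2
    refine ⟨⟨(x : ℕ) / 2, by omega⟩, ?_⟩
    rw [borda_eq (2 * T) hT4 m x]
    show _ = m * (2 * T + 1) + 7 + 12 * (((x : ℕ) / 2) / 2) + ((x : ℕ) / 2) % 2
    generalize m * (2 * T + 1) = C
    omega
  · intro j
    beta_reduce
    have hj := j.2
    have hfil : (Finset.univ.filter (fun x : Fin (2 * T) =>
        bordaScore (fun i : Fin (2 * m + 3) => voter (2 * T) hT4 i.val) x
          = m * (2 * T + 1) + 7 + 12 * ((j : ℕ) / 2) + (j : ℕ) % 2))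
        = ({⟨2 * (j : ℕ), by omega⟩, ⟨2 * (j : ℕ) + 1, by omega⟩} : Finset (Fin (2 * T))) := by
      ext x
      have hx := x.2
      rw [Finset.mem_filter, borda_eq (2 * T) hT4 m x]
      simp only [Finset.mem_univ, true_and, Finset.mem_insert, Finset.mem_singleton,
        Fin.ext_iff]
      generalize m * (2 * T + 1) = C
      omega
    rw [hfil]
    exact Finset.card_pair (by simp [Fin.ext_iff])

lemma sum_borda (M n : ℕ) (u : Fin n → (Fin M ≃ Fin M)) :
    ∑ x : Fin M, bordaScore u x = n * (∑ k ∈ Finset.range M, (k + 1)) := by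
  unfold bordaScore
  rw [Finset.sum_comm]
  have h1 : ∀ i : Fin n, ∑ x : Fin M, ((u i x : ℕ) + 1)
      = ∑ k ∈ Finset.range M, (k + 1) := by
    intro i
    rw [Equiv.sum_comp (u i) (fun y : Fin M => ((y : ℕ) + 1))]
    exact Fin.sum_univ_eq_sum_range (fun k => k + 1) M
  rw [Finset.sum_congr rfl (fun i _ => h1 i)]
  simp [Finset.sum_const, Finset.card_univ, mul_comm]

lemma range_sum_odd (T : ℕ) (hT : Odd T) :
    Odd (∑ k ∈ Finset.range (2 * T), (k + 1)) := by
  have hg := Finset.sum_range_id_mul_two (2 * T)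
  have hs : ∑ k ∈ Finset.range (2 * T), (k + 1)
      = (∑ k ∈ Finset.range (2 * T), k) + 2 * T := by
    rw [Finset.sum_add_distrib]; simp
  have hA : (∑ k ∈ Finset.range (2 * T), k) = T * (2 * T - 1) := by
    have h2 : (∑ k ∈ Finset.range (2 * T), k) * 2 = (T * (2 * T - 1)) * 2 := by
      rw [hg]; cases T with
      | zero => simp
      | succ t =>
        have h1 : 2 * (t + 1) - 1 = 2 * t + 1 := by omega
        rw [h1]; ring
    exact Nat.eq_of_mul_eq_mul_right two_pos h2
  rw [hs, hA]
  obtain ⟨s, hsod⟩ := hT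
  subst hsod
  refine ⟨4 * s ^ 2 + 5 * s + 1, ?_⟩
  have h1 : 2 * (2 * s + 1) - 1 = 4 * s + 1 := by omega
  rw [h1]; ring

lemma not_in_range (T n : ℕ) (hT : Odd T) (hn : Odd n) :
    ¬ InBordaRange n (List.replicate T 2) := by
  rintro ⟨u, scores, hmono, hall, hcard⟩
  have hsum : (List.replicate T 2).sum = 2 * T := by
    simp [List.sum_replicate, smul_eq_mul, Nat.mul_comm]
  choose g hg using hall
  have hfib : ∀ j, (Finset.univ.filter (fun x => g x = j))
      = (Finset.univ.filter (fun x => bordaScore u x = scores j)) := by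
    intro j
    ext x
    simp only [Finset.mem_filter, Finset.mem_univ, true_and]
    constructor
    · intro h; rw [hg x, h]
    · intro h; exact hmono.injective (by rw [← hg x, h])
  have hS : ∑ x, bordaScore u x = ∑ j, 2 * scores j := by
    rw [← Finset.sum_fiberwise_of_maps_to (fun x _ => Finset.mem_univ (g x))
      (fun x => bordaScore u x)]
    refine Finset.sum_congr rfl (fun j _ => ?_)
    have : ∀ x ∈ Finset.univ.filter (fun x => g x = j), bordaScore u x = scores j := by
      intro x hx
      rw [Finset.mem_filter] at hx
      rw [hg x, hx.2]
    rw [Finset.sum_congr rfl this, Finset.sum_const, hfib, hcard]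
    simp [mul_comm]
  have hEven : Even (∑ x, bordaScore u x) := by
    rw [hS]
    obtain ⟨c, hc⟩ := Finset.dvd_sum (fun j _ => Dvd.intro (scores j) rfl :
      ∀ j ∈ Finset.univ, 2 ∣ 2 * scores j)
    exact ⟨c, by omega⟩
  have hOdd : Odd (∑ x, bordaScore u x) := by
    rw [sum_borda _ n u, hsum]
    exact hn.mul (range_sum_odd T hT)
  exact (Nat.not_even_iff_odd.mpr hOdd) hEven


theorem stmt9 :
    (∀ n, Odd n → 3 ≤ n → ∀ T, Even T → 2 ≤ T →
      InBordaRange n (List.replicate T 2)) ∧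
    (∀ T, Odd T → ∀ n, Odd n → ¬ InBordaRange n (List.replicate T 2)) := by
  constructor
  · intro n hn hn3 T hT hT2
    obtain ⟨m, hm⟩ : ∃ m, n = 2 * m + 3 := by
      obtain ⟨k, hk⟩ := hn; exact ⟨k - 1, by omega⟩
    have hT4 : (2 * T) % 4 = 0 := by
      obtain ⟨t, ht⟩ := hT; omega
    subst hm
    obtain ⟨u, scores, h1, h2, h3⟩ := exists_profile m T hT4
    unfold InBordaRange
    have hsum : (List.replicate T 2).sum = 2 * T := by
      simp [List.sum_replicate, smul_eq_mul, Nat.mul_comm]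
    rw [hsum]
    have hlen : (List.replicate T 2).length = T := List.length_replicate
    refine ⟨u, fun j => scores (Fin.cast hlen j), ?_, ?_, ?_⟩
    · intro a b hab
      exact h1 hab
    · intro x
      obtain ⟨j, hj⟩ := h2 x
      exact ⟨Fin.cast hlen.symm j, hj⟩
    · intro j
      rw [List.get_eq_getElem, List.getElem_replicate]
      exact h3 (Fin.cast hlen j)
  · exact fun T hT n hn => not_in_range T n hT hn
end

section
/- For every odd n ≥ 3 and every positive integer k, the pattern (4, 2, 4, 4, ..., 4, 2) consisting of a level of size 4, a level of size 2, then k - 1 further levels of size 4, then a level of size 2, is in the Borda range for n voters. -/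
namespace Stmt11Aux

def sc (k j : ℕ) : ℕ :=
  if j = 0 then 9 else if j = 1 then 14
  else if j = k+1 then (if k % 2 = 1 then 12*k+10 else 12*k+9)
  else 12*j + 1 + (if j % 2 = 0 then 1 else 0)

def lvl (k X : ℕ) : ℕ :=
  if X ≤ 4 then 0 else if 4*k+3 ≤ X then k+1 else (X+1)/4

/-- score as a direct function of the (1-based) position `X` -/
def scX (k X : ℕ) : ℕ :=
  if X ≤ 4 then 9 else if X ≤ 6 then 14
  else if 4*k+3 ≤ X then (if k % 2 = 1 then 12*k+10 else 12*k+9)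
  else 3*(X+1) - 3*((X+1) % 4) + 1 + (if X % 8 ≤ 2 ∨ X % 8 = 7 then 1 else 0)

lemma sc_lvl (k X : ℕ) (hk : 1 ≤ k) (h2 : X ≤ 4*k+4) :
    sc k (lvl k X) = scX k X := by
  by_cases c1 : X ≤ 4
  · have h : lvl k X = 0 := by unfold lvl; split_ifs <;> omega
    rw [h]; unfold sc scX; split_ifs <;> first | omega | exact ‹False›.elim
  · by_cases c2 : X ≤ 6
    · have h : lvl k X = 1 := by unfold lvl; split_ifs <;> omega
      rw [h]; unfold sc scX; split_ifs <;> first | omega | exact ‹False›.elim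
    · by_cases c3 : 4*k+3 ≤ X
      · have h : lvl k X = k+1 := by unfold lvl; split_ifs <;> omega
        rw [h]; unfold sc scX; split_ifs <;> first | omega | exact ‹False›.elim
      · have h : lvl k X = (X+1)/4 := by unfold lvl; split_ifs <;> omega
        rw [h]; unfold sc scX; split_ifs <;> first | omega | exact ‹False›.elim

lemma scX_range (k : ℕ) (hk : 1 ≤ k) (X : ℕ) (h1 : 1 ≤ X) (h2 : X ≤ 4*k+4) :
    2*X + 1 ≤ scX k X ∧ scX k X ≤ 2*X + (4*k+4) := by
  unfold scX; split_ifs <;> omega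

lemma scX_inj (k : ℕ) (hk : 1 ≤ k) : ∀ X1 X2, 1 ≤ X1 → X1 ≤ 4*k+4 → 1 ≤ X2 → X2 ≤ 4*k+4 →
    scX k X1 - 2*X1 = scX k X2 - 2*X2 → X1 = X2 := by
  intro X1 X2 h1 h2 h3 h4 h
  unfold scX at h; split_ifs at h <;> omega

lemma sc_mono (k : ℕ) (hk : 1 ≤ k) : ∀ a b, a < b → b ≤ k+1 → sc k a < sc k b := by
  intro a b hab hb
  unfold sc; split_ifs <;> first | omega | exact ‹False›.elim

lemma sc_inj (k : ℕ) (hk : 1 ≤ k) : ∀ a b, a ≤ k+1 → b ≤ k+1 → sc k a = sc k b → a = b := by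
  intro a b ha hb h
  unfold sc at h; split_ifs at h <;> omega

lemma lvl_le (k X : ℕ) : lvl k X ≤ k+1 := by
  unfold lvl; split_ifs <;> omega

lemma lvl_eq_iff (k X : ℕ) (hk : 1 ≤ k) (h1 : 1 ≤ X) (h2 : X ≤ 4*k+4) (j : ℕ) (hj : j ≤ k+1) :
    lvl k X = j ↔ ((if j = 0 then 1 else if j = 1 then 5 else if j = k+1 then 4*k+3 else 4*j-1) ≤ X
      ∧ X ≤ (if j = 0 then 4 else if j = 1 then 6 else if j = k+1 then 4*k+4 else 4*j+2)) := by
  unfold lvl; split_ifs <;> omega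

/-- the special voter's ranking function -/
def e3fun (k : ℕ) (hk : 1 ≤ k) : Fin (4*k+4) → Fin (4*k+4) := fun x =>
  ⟨sc k (lvl k (x.val+1)) - 2*(x.val+1) - 1, by
    have hx := x.isLt
    have h := scX_range k hk (x.val+1) (by omega) (by omega)
    have e := sc_lvl k (x.val+1) hk (by omega)
    omega⟩

lemma e3_inj (k : ℕ) (hk : 1 ≤ k) : Function.Injective (e3fun k hk) := by
  intro a b h
  have ha := a.isLt
  have hb := b.isLt
  have ra := scX_range k hk (a.val+1) (by omega) (by omega)
  have rb := scX_range k hk (b.val+1) (by omega) (by omega)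
  have ea := sc_lvl k (a.val+1) hk (by omega)
  have eb := sc_lvl k (b.val+1) hk (by omega)
  have hv : (e3fun k hk a).val = (e3fun k hk b).val := congrArg Fin.val h
  simp only [e3fun] at hv
  have := scX_inj k hk (a.val+1) (b.val+1) (by omega) (by omega) (by omega) (by omega)
    (by omega)
  exact Fin.ext (by omega)

noncomputable def E3 (k : ℕ) (hk : 1 ≤ k) : Fin (4*k+4) ≃ Fin (4*k+4) :=
  Equiv.ofBijective (e3fun k hk) (Finite.injective_iff_bijective.mp (e3_inj k hk))

/-- the voters, indexed by ℕ -/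
noncomputable def V (k : ℕ) (hk : 1 ≤ k) : ℕ → (Fin (4*k+4) ≃ Fin (4*k+4)) := fun i =>
  if i = 0 then E3 k hk else if i ≤ 2 then Equiv.refl _
  else if i % 2 = 1 then Equiv.refl _ else Fin.revPerm

lemma pair_sum (m x w : ℕ) (hx : x < m) (g : ℕ → ℕ)
    (hodd : ∀ i, i % 2 = 1 → g i = x+1) (heven : ∀ i, 3 ≤ i → i % 2 = 0 → g i = m - x) :
    ∑ i ∈ Finset.Ico 3 (3+2*w), g i = w * (m+1) := by
  induction w with
  | zero => simp
  | succ w ih =>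
    have h1 : 3 + 2*(w+1) = (3+2*w) + 1 + 1 := by ring
    rw [h1, Finset.sum_Ico_succ_top (by omega), Finset.sum_Ico_succ_top (by omega), ih]
    rw [hodd (3+2*w) (by omega), heven (3+2*w+1) (by omega) (by omega)]
    have : x + 1 + (m - x) = m + 1 := by omega
    ring_nf
    omega

lemma V_apply_val (k : ℕ) (hk : 1 ≤ k) (x : Fin (4*k+4)) (i : ℕ) :
    ((V k hk i x : Fin (4*k+4)) : ℕ) + 1 =
      if i = 0 then sc k (lvl k (x.val+1)) - 2*(x.val+1)
      else if i ≤ 2 then x.val + 1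
      else if i % 2 = 1 then x.val + 1 else 4*k+4 - x.val := by
  have hx := x.isLt
  unfold V
  split_ifs with h1 h2 h3
  · show (e3fun k hk x).val + 1 = _
    have h := scX_range k hk (x.val+1) (by omega) (by omega)
    have e := sc_lvl k (x.val+1) hk (by omega)
    simp only [e3fun]
    omega
  · rfl
  · rfl
  · show (Fin.rev x).val + 1 = _
    rw [Fin.val_rev]
    omega

lemma score_eq (k : ℕ) (hk : 1 ≤ k) (w : ℕ) (x : Fin (4*k+4)) :
    bordaScore (fun i : Fin (3+2*w) => V k hk i.val) x
      = sc k (lvl k (x.val+1)) + w * (4*k+4+1) := by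
  have hx := x.isLt
  have hr := scX_range k hk (x.val+1) (by omega) (by omega)
  have he := sc_lvl k (x.val+1) hk (by omega)
  unfold bordaScore
  rw [Fin.sum_univ_eq_sum_range (fun i => ((V k hk i x : ℕ) + 1)) (3+2*w)]
  rw [Finset.range_eq_Ico,
    ← Finset.sum_Ico_consecutive _ (show (0:ℕ) ≤ 3 by omega) (show (3:ℕ) ≤ 3+2*w by omega)]
  have h1 : ∑ i ∈ Finset.Ico 0 3, ((V k hk i x : ℕ) + 1)
      = sc k (lvl k (x.val+1)) - 2*(x.val+1) + (x.val+1) + (x.val+1) := by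
    rw [← Finset.range_eq_Ico]
    rw [Finset.sum_range_succ, Finset.sum_range_succ, Finset.sum_range_one]
    rw [V_apply_val, V_apply_val, V_apply_val]
    norm_num
  have h2 : ∑ i ∈ Finset.Ico 3 (3+2*w), ((V k hk i x : ℕ) + 1) = w * (4*k+4+1) := by
    refine pair_sum (4*k+4) x.val w (by omega) _ ?_ ?_
    · intro i hi
      rw [V_apply_val]
      split_ifs <;> omega
    · intro i hi3 hi
      rw [V_apply_val]
      split_ifs <;> omega
  rw [h1, h2]
  omega

lemma card_filter_Ico (m a b : ℕ) (ha : 1 ≤ a) (hb : b ≤ m) (P : Fin m → Prop)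
    [DecidablePred P] (hP : ∀ x, P x ↔ (a ≤ x.val + 1 ∧ x.val + 1 ≤ b)) :
    (Finset.univ.filter P).card = b + 1 - a := by
  have h : (Finset.univ.filter P).card = (Finset.Ico (a-1) b).card := by
    apply Finset.card_bij (fun x _ => x.val)
    · intro x hxmem
      rw [Finset.mem_filter] at hxmem
      have := (hP x).mp hxmem.2
      rw [Finset.mem_Ico]
      omega
    · intro x _ y _ hxy
      exact Fin.ext hxy
    · intro c hc
      rw [Finset.mem_Ico] at hc
      refine ⟨⟨c, by omega⟩, ?_, rfl⟩
      rw [Finset.mem_filter]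
      exact ⟨Finset.mem_univ _, (hP _).mpr (by simp; omega)⟩
  rw [h, Nat.card_Ico]
  omega

end Stmt11Aux

open Stmt11Aux in
theorem stmt11 (n : ℕ) (hn : Odd n) (hn3 : 3 ≤ n) (k : ℕ) (hk : 1 ≤ k) :
    InBordaRange n ([4, 2] ++ List.replicate (k - 1) 4 ++ [2]) := by
  obtain ⟨w, hw⟩ : ∃ w, n = 3 + 2*w := by
    obtain ⟨c, hc⟩ := hn; exact ⟨c - 1, by omega⟩
  subst hw
  have hsum : ([4, 2] ++ List.replicate (k - 1) 4 ++ [2] : List ℕ).sum = 4*k+4 := by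
    simp [List.sum_append, List.sum_replicate, smul_eq_mul]; omega
  have hlen : ([4, 2] ++ List.replicate (k - 1) 4 ++ [2] : List ℕ).length = k+2 := by
    simp; omega
  have hget : ∀ j : Fin ([4, 2] ++ List.replicate (k - 1) 4 ++ [2] : List ℕ).length,
      ([4, 2] ++ List.replicate (k - 1) 4 ++ [2] : List ℕ).get j
        = if (j : ℕ) = 0 then 4 else if (j : ℕ) = 1 then 2
          else if (j : ℕ) = k+1 then 2 else 4 := by
    intro j
    obtain ⟨v, hv⟩ := j
    rw [hlen] at hv
    simp only [List.get_eq_getElem]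
    match v, hv with
    | 0, _ => simp
    | 1, _ => simp
    | (v+2), hv =>
      have hcons : ([4, 2] ++ List.replicate (k - 1) 4 ++ [2] : List ℕ)
          = 4 :: 2 :: (List.replicate (k - 1) 4 ++ [2]) := by simp
      by_cases hvk : v < k - 1
      · have e1 : ([4, 2] ++ List.replicate (k - 1) 4 ++ [2] : List ℕ)[v+2]'(by omega)
            = (List.replicate (k - 1) 4 ++ [2] : List ℕ)[v]'(by simp; omega) := by
          simp [hcons]
        rw [e1, List.getElem_append_left (by simp; omega), List.getElem_replicate]
        split_ifs <;> omega
      · have hv' : v = k - 1 := by omega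
        have e1 : ([4, 2] ++ List.replicate (k - 1) 4 ++ [2] : List ℕ)[v+2]'(by omega)
            = (List.replicate (k - 1) 4 ++ [2] : List ℕ)[v]'(by simp; omega) := by
          simp [hcons]
        rw [e1, List.getElem_append_right (by simp; omega)]
        simp [hv']
        omega
  unfold InBordaRange
  rw [hsum]
  refine ⟨fun i => V k hk i.val, fun j => sc k (j : ℕ) + w * (4*k+4+1), ?_, ?_, ?_⟩
  · intro j1 j2 h12
    have hj2 : (j2 : ℕ) ≤ k + 1 := by have := j2.isLt; omega
    exact Nat.add_lt_add_right (sc_mono k hk _ _ h12 hj2) _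
  · intro x
    refine ⟨⟨lvl k (x.val+1), by have := lvl_le k (x.val+1); omega⟩, ?_⟩
    exact score_eq k hk w x
  · intro j
    have hj : (j : ℕ) ≤ k + 1 := by have := j.isLt; omega
    have hcard := card_filter_Ico (4*k+4)
      (if (j:ℕ) = 0 then 1 else if (j:ℕ) = 1 then 5 else if (j:ℕ) = k+1 then 4*k+3 else 4*(j:ℕ)-1)
      (if (j:ℕ) = 0 then 4 else if (j:ℕ) = 1 then 6 else if (j:ℕ) = k+1 then 4*k+4 else 4*(j:ℕ)+2)
      (by split_ifs <;> omega) (by split_ifs <;> omega)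
      (fun x => bordaScore (fun i : Fin (3+2*w) => V k hk i.val) x = sc k (j : ℕ) + w * (4*k+4+1))
      ?_
    · rw [hcard, hget j]
      split_ifs <;> omega
    · intro x
      have hx := x.isLt
      simp only [score_eq k hk w x]
      rw [← lvl_eq_iff k (x.val+1) hk (by omega) (by omega) (j : ℕ) hj]
      constructor
      · intro h
        exact sc_inj k hk _ _ (lvl_le k (x.val+1)) hj (by omega)
      · intro h
        rw [h]
end

section
/- For every odd n ≥ 3 and every positive integer k, the pattern (2, 4, ..., 4, 2, 4) consisting of a level of size 2, then k levels of size 4, a level of size 2, and a final level of size 4, is in the Borda range for n voters. -/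
set_option maxHeartbeats 1000000
set_option linter.unusedVariables false

namespace Stmt12Aux

/-- value `ε + 4E` attached to dyad `δ` (pair of alternatives `2δ, 2δ+1`) -/
def vfun (k δ : ℕ) : ℕ :=
  if δ = 0 then 0
  else if δ = 2*k+1 then k % 2 + 4*(k+1)
  else if δ = 2*k+2 then (k+1) % 2 + 4*(k+1)
  else if δ = 2*k+3 then (k+1) % 2 + 4*k
  else if δ % 2 = 1 then ((δ+1)/2) % 2 + 4*((δ+1)/2)
  else (δ/2) % 2 + 4*(δ/2) - 4

/-- third voter's ranking (0-based) -/
def r3fun (k x : ℕ) : ℕ := vfun k (x/2) + 2 - 2*(x % 2)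

/-- block index of alternative `x` -/
def blkfun (k x : ℕ) : ℕ :=
  if x ≤ 1 then 0 else if x ≤ 4*k+1 then (x+2)/4
  else if x ≤ 4*k+3 then k+1 else k+2

/-- the 3-voter Borda score of block `j` -/
def tfun (k j : ℕ) : ℕ :=
  if j = 0 then 5 else if j ≤ k then 12*j+1+j % 2
  else if j = k+1 then 12*k+13+k % 2 else 12*k+17+(k+1) % 2

def lofun (k j : ℕ) : ℕ :=
  if j = 0 then 0 else if j ≤ k then 4*j-2
  else if j = k+1 then 4*k+2 else 4*k+4

def hifun (k j : ℕ) : ℕ :=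
  if j = 0 then 2 else if j ≤ k then 4*j+2
  else if j = k+1 then 4*k+4 else 4*k+8

lemma vcases (k δ : ℕ) (hk : 1 ≤ k) (h : δ < 2*k+4) :
    (δ = 0 ∧ vfun k δ = 0) ∨
    (δ = 2*k+1 ∧ vfun k δ = k % 2 + 4*(k+1)) ∨
    (δ = 2*k+2 ∧ vfun k δ = (k+1) % 2 + 4*(k+1)) ∨
    (δ = 2*k+3 ∧ vfun k δ = (k+1) % 2 + 4*k) ∨
    (∃ j, 1 ≤ j ∧ j ≤ k ∧ δ = 2*j-1 ∧ vfun k δ = j % 2 + 4*j) ∨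
    (∃ j, 1 ≤ j ∧ j ≤ k ∧ δ = 2*j ∧ vfun k δ = j % 2 + 4*j - 4) := by
  simp only [vfun]
  split_ifs with h1 h2 h3 h4 h5
  · exact Or.inl ⟨h1, rfl⟩
  · exact Or.inr (Or.inl ⟨h2, rfl⟩)
  · exact Or.inr (Or.inr (Or.inl ⟨h3, rfl⟩))
  · exact Or.inr (Or.inr (Or.inr (Or.inl ⟨h4, rfl⟩)))
  · refine Or.inr (Or.inr (Or.inr (Or.inr (Or.inl ⟨(δ+1)/2, by omega, by omega, by omega, ?_⟩))))
    omega
  · refine Or.inr (Or.inr (Or.inr (Or.inr (Or.inr ⟨δ/2, by omega, by omega, by omega, ?_⟩))))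
    omega

lemma r3_lt (k : ℕ) (hk : 1 ≤ k) : ∀ x < 4*k+8, r3fun k x < 4*k+8 := by
  intro x hx
  simp only [r3fun]
  rcases vcases k (x/2) hk (by omega) with ⟨h1,h2⟩|⟨h1,h2⟩|⟨h1,h2⟩|⟨h1,h2⟩|⟨j,hj1,hj2,h1,h2⟩|⟨j,hj1,hj2,h1,h2⟩ <;>
    omega

lemma r3_inj (k : ℕ) (hk : 1 ≤ k) :
    ∀ x < 4*k+8, ∀ y < 4*k+8, r3fun k x = r3fun k y → x = y := by
  intro x hx y hy h
  simp only [r3fun] at h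
  rcases vcases k (x/2) hk (by omega) with ⟨h1,h2⟩|⟨h1,h2⟩|⟨h1,h2⟩|⟨h1,h2⟩|⟨j,hj1,hj2,h1,h2⟩|⟨j,hj1,hj2,h1,h2⟩ <;>
    rcases vcases k (y/2) hk (by omega) with ⟨g1,g2⟩|⟨g1,g2⟩|⟨g1,g2⟩|⟨g1,g2⟩|⟨i,hi1,hi2,g1,g2⟩|⟨i,hi1,hi2,g1,g2⟩ <;>
    omega

lemma score_eq (k : ℕ) (hk : 1 ≤ k) :
    ∀ x < 4*k+8, 2*x + r3fun k x + 3 = tfun k (blkfun k x) := by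
  intro x hx
  simp only [r3fun]
  rcases vcases k (x/2) hk (by omega) with ⟨h1,h2⟩|⟨h1,h2⟩|⟨h1,h2⟩|⟨h1,h2⟩|⟨j,hj1,hj2,h1,h2⟩|⟨j,hj1,hj2,h1,h2⟩ <;>
    · simp only [blkfun, tfun]
      split_ifs <;> (try exact ‹False›.elim) <;> omega

lemma blk_lt (k : ℕ) : ∀ x, blkfun k x < k+3 := by
  intro x
  simp only [blkfun]
  split_ifs <;> omega

lemma tfun_mono (k : ℕ) (hk : 1 ≤ k) :
    ∀ a b, a < b → b < k+3 → tfun k a < tfun k b := by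
  intro a b hab hb
  simp only [tfun]
  split_ifs <;> (try exact ‹False›.elim) <;> omega

lemma tfun_inj (k : ℕ) (hk : 1 ≤ k) :
    ∀ a b, a < k+3 → b < k+3 → tfun k a = tfun k b → a = b := by
  intro a b ha hb h
  simp only [tfun] at h
  split_ifs at h <;> omega

lemma blk_iff (k : ℕ) (hk : 1 ≤ k) (j : ℕ) (hj : j < k+3) (i : ℕ) :
    (i < 4*k+8 ∧ blkfun k i = j) ↔ (lofun k j ≤ i ∧ i < hifun k j) := by
  simp only [blkfun, lofun, hifun]
  split_ifs <;> (try exact ‹False›.elim) <;> omega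

/-- the profile: voters 0,1 and all odd voters vote the identity order; voter 2
votes `e3`; the remaining (even ≥ 4) voters vote the reversal. -/
def voter (M : ℕ) (e3 : Equiv.Perm (Fin M)) (t : ℕ) : Equiv.Perm (Fin M) :=
  if t = 2 then e3 else if t % 2 = 1 ∨ t = 0 then Equiv.refl _ else Fin.revPerm

lemma voter_two (M : ℕ) (e3 : Equiv.Perm (Fin M)) : voter M e3 2 = e3 := by
  simp [voter]

lemma voter_zero (M : ℕ) (e3 : Equiv.Perm (Fin M)) : voter M e3 0 = Equiv.refl _ := by
  simp [voter]

lemma voter_odd (M : ℕ) (e3 : Equiv.Perm (Fin M)) (t : ℕ) (ht : t % 2 = 1) :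
    voter M e3 t = Equiv.refl _ := by
  rw [voter, if_neg (by omega), if_pos (Or.inl ht)]

lemma voter_even (M : ℕ) (e3 : Equiv.Perm (Fin M)) (t : ℕ) (ht : t % 2 = 0)
    (ht2 : t ≠ 2) (ht0 : t ≠ 0) : voter M e3 t = Fin.revPerm := by
  rw [voter, if_neg ht2, if_neg (by omega)]

lemma tail_sum (M : ℕ) (e3 : Equiv.Perm (Fin M)) (x : Fin M) :
    ∀ w : ℕ, ∑ i ∈ Finset.Ico 3 (2*w+3), ((voter M e3 i x : ℕ) + 1) = w * (M+1) := by
  intro w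
  induction w with
  | zero => simp
  | succ w ih =>
    have h1 : 2*(w+1)+3 = (2*w+4)+1 := by ring
    rw [h1, Finset.sum_Ico_succ_top (by omega), Finset.sum_Ico_succ_top (by omega), ih]
    rw [voter_odd M e3 (2*w+3) (by omega), voter_even M e3 (2*w+4) (by omega) (by omega) (by omega)]
    have hx : (x : ℕ) < M := x.isLt
    simp only [Equiv.refl_apply, Fin.revPerm_apply, Fin.val_rev]
    ring_nf
    omega

end Stmt12Aux

open Stmt12Aux in
theorem stmt12 (n : ℕ) (hn : Odd n) (hn3 : 3 ≤ n) (k : ℕ) (hk : 1 ≤ k) :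
    InBordaRange n ([2] ++ List.replicate k 4 ++ [2, 4]) := by
  classical
  obtain ⟨t, ht⟩ := hn
  obtain ⟨w, hnw⟩ : ∃ w, n = 2*w+3 := ⟨t - 1, by omega⟩
  set p : List ℕ := [2] ++ List.replicate k 4 ++ [2, 4] with hp
  have hsum : p.sum = 4*k+8 := by
    simp [hp, List.sum_replicate, smul_eq_mul]; ring
  have hlen : p.length = k+3 := by simp [hp]
  -- the third voter's permutation
  have hf : ∀ x : Fin p.sum, r3fun k (x : ℕ) < p.sum := by
    intro x
    have hx := x.isLt
    have h2 := r3_lt k hk (x : ℕ) (by omega)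
    omega
  let f : Fin p.sum → Fin p.sum := fun x => ⟨r3fun k (x : ℕ), hf x⟩
  have hinj : Function.Injective f := by
    intro x y hxy
    have hx := x.isLt; have hy := y.isLt
    have hval : r3fun k (x : ℕ) = r3fun k (y : ℕ) := congrArg Fin.val hxy
    exact Fin.ext (r3_inj k hk _ (by omega) _ (by omega) hval)
  let e3 : Equiv.Perm (Fin p.sum) := Equiv.ofBijective f (Finite.injective_iff_bijective.mp hinj)
  let u : Fin n → Equiv.Perm (Fin p.sum) := fun i => voter p.sum e3 (i : ℕ)
  -- score computation
  have hscore : ∀ x : Fin p.sum,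
      bordaScore u x = tfun k (blkfun k (x : ℕ)) + w * (p.sum + 1) := by
    intro x
    have hxlt : (x : ℕ) < 4*k+8 := by have := x.isLt; omega
    have key : bordaScore u x = 2*(x:ℕ) + r3fun k (x:ℕ) + 3 + w * (p.sum + 1) := by
      unfold bordaScore
      have h1 : ∑ i : Fin n, ((u i x : ℕ) + 1)
          = ∑ i ∈ Finset.range n, ((voter p.sum e3 i x : ℕ) + 1) :=
        Fin.sum_univ_eq_sum_range (fun i => ((voter p.sum e3 i x : ℕ) + 1)) n
      rw [h1, Finset.range_eq_Ico,
        ← Finset.sum_Ico_consecutive _ (by omega : 0 ≤ 3) (by omega : 3 ≤ n)]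
      have h2 : ∑ i ∈ Finset.Ico 0 3, ((voter p.sum e3 i x : ℕ) + 1)
          = 2*(x:ℕ) + r3fun k (x:ℕ) + 3 := by
        rw [← Finset.range_eq_Ico]
        rw [Finset.sum_range_succ, Finset.sum_range_succ, Finset.sum_range_one]
        rw [voter_zero, voter_odd p.sum e3 1 (by norm_num), voter_two]
        have he3 : (e3 x : ℕ) = r3fun k (x : ℕ) := by
          show ((Equiv.ofBijective f _) x : ℕ) = _
          rw [Equiv.ofBijective_apply]
        simp only [Equiv.refl_apply, he3]
        ring
      have h3 : ∑ i ∈ Finset.Ico 3 n, ((voter p.sum e3 i x : ℕ) + 1) = w * (p.sum + 1) := by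
        rw [hnw]; exact tail_sum p.sum e3 x w
      rw [h2, h3]
    rw [key, ← score_eq k hk _ hxlt]
  -- conclude
  refine ⟨u, fun j => tfun k (j : ℕ) + w * (p.sum + 1), ?_, ?_, ?_⟩
  · intro a b hab
    have hb : (b : ℕ) < k+3 := by have := b.isLt; omega
    exact Nat.add_lt_add_right (tfun_mono k hk _ _ hab hb) _
  · intro x
    exact ⟨⟨blkfun k (x : ℕ), by rw [hlen]; exact blk_lt k _⟩, hscore x⟩
  · intro j
    have hj : (j : ℕ) < k+3 := by have := j.isLt; omega
    have hiff : ∀ x : Fin p.sum,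
        (bordaScore u x = tfun k (j : ℕ) + w * (p.sum + 1)) ↔ blkfun k (x : ℕ) = (j : ℕ) := by
      intro x
      rw [hscore x]
      constructor
      · intro h
        exact tfun_inj k hk _ _ (blk_lt k _) hj (by omega)
      · intro h; rw [h]
    rw [Finset.filter_congr (fun x _ => hiff x)]
    have hcard : (Finset.univ.filter (fun x : Fin p.sum => blkfun k (x : ℕ) = (j : ℕ))).card
        = hifun k (j : ℕ) - lofun k (j : ℕ) := by
      rw [Finset.card_filter]
      rw [Fin.sum_univ_eq_sum_range (fun i => if blkfun k i = (j : ℕ) then 1 else 0) p.sum]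
      rw [← Finset.card_filter]
      have hset : (Finset.range p.sum).filter (fun i => blkfun k i = (j : ℕ))
          = Finset.Ico (lofun k (j : ℕ)) (hifun k (j : ℕ)) := by
        ext i
        simp only [Finset.mem_filter, Finset.mem_range, Finset.mem_Ico, hsum]
        exact blk_iff k hk _ hj i
      rw [hset, Nat.card_Ico]
    rw [hcard]
    -- now compute p.get j
    rcases Nat.eq_zero_or_pos (j : ℕ) with h0 | hpos
    · have hg : p.get j = 2 := by
        have : p.get j = p.get ⟨0, by omega⟩ := by congr 1; exact Fin.ext h0
        rw [this]; rfl
      rw [hg]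
      simp only [lofun, hifun, h0]
      norm_num
    · have hget : p.get j = p[(j : ℕ)]'(j.isLt) := List.get_eq_getElem
      rw [hget]
      have hcons : p = 2 :: (List.replicate k 4 ++ [2, 4]) := by simp [hp]
      rcases Nat.exists_eq_add_of_lt hpos with ⟨j', hj'⟩
      have hj'' : (j : ℕ) = j' + 1 := by omega
      rcases lt_or_ge j' k with hlt | hge
      · have hv : p[(j : ℕ)]'(j.isLt) = 4 := by
          simp only [hcons, hj'']
          rw [List.getElem_cons_succ]
          rw [List.getElem_append_left (by simpa using hlt)]
          simp
        rw [hv]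
        simp only [lofun, hifun]
        rw [if_neg (by omega), if_pos (by omega), if_neg (by omega), if_pos (by omega)]
        omega
      · rcases Nat.eq_or_lt_of_le hge with heq | hgt
        · -- j' = k, so j = k+1
          have hv : p[(j : ℕ)]'(j.isLt) = 2 := by
            simp only [hcons, hj'']
            rw [List.getElem_cons_succ]
            rw [List.getElem_append_right (by simpa using hge)]
            simp [← heq]
          rw [hv]
          simp only [lofun, hifun]
          rw [if_neg (by omega), if_neg (by omega), if_pos (by omega),
            if_neg (by omega), if_neg (by omega), if_pos (by omega)]
          omega
        · -- j' = k+1, so j = k+2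
          have hj2 : j' = k + 1 := by omega
          have hv : p[(j : ℕ)]'(j.isLt) = 4 := by
            simp only [hcons, hj'']
            rw [List.getElem_cons_succ]
            rw [List.getElem_append_right (by simpa using hge)]
            simp [hj2]
          rw [hv]
          simp only [lofun, hifun]
          rw [if_neg (by omega), if_neg (by omega), if_neg (by omega),
            if_neg (by omega), if_neg (by omega), if_neg (by omega)]
          omega
end

section
/- For every odd n ≥ 3 and every positive integer k, the pattern (4, 2, 4, ..., 4, 2, 4), i.e., a level of size 4, a level of size 2, then k - 1 levels of size 4, a level of size 2, and a final level of size 4, is in the Borda range for n voters. -/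
/-- the third voter's ranking (0-indexed). -/
def sigF (k y : ℕ) : ℕ :=
  if y ≤ 3 then 6 - 2*y
  else if y ≤ 5 then 11 - 2*y
  else if y ≤ 4*k+1 then
    (if ((y+2)/4) % 2 = 0 then 12*((y+2)/4)+2-2*y else 12*((y+2)/4)-5-2*y)
  else if y ≤ 4*k+3 then (if k % 2 = 1 then 12*k+10-2*y else 12*k+3-2*y)
  else 12*k+15-2*y

/-- the 3-voter score level values. -/
def wF (k j : ℕ) : ℕ :=
  if j = 0 then 9
  else if j = 1 then 14
  else if j ≤ k then (if j % 2 = 0 then 12*j+5 else 12*j-2)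
  else if j = k+1 then (if k % 2 = 1 then 12*k+13 else 12*k+6)
  else 12*j-6

def AF (k j : ℕ) : ℕ :=
  if j = 0 then 0 else if j = 1 then 4
  else if j ≤ k then 4*j-2
  else if j = k+1 then 4*k+2 else 4*k+4

def BF (k j : ℕ) : ℕ :=
  if j = 0 then 3 else if j = 1 then 5
  else if j ≤ k then 4*j+1
  else if j = k+1 then 4*k+3 else 4*k+7

lemma sig_lt (k y : ℕ) (hk : 1 ≤ k) (h : y < 4*k+8) : sigF k y < 4*k+8 := by
  unfold sigF; split_ifs <;> first | contradiction | omega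

lemma sig_inj (k y₁ y₂ : ℕ) (hk : 1 ≤ k) (h₁ : y₁ < 4*k+8) (h₂ : y₂ < 4*k+8)
    (h : sigF k y₁ = sigF k y₂) : y₁ = y₂ := by
  unfold sigF at h; split_ifs at h <;> first | contradiction | omega

lemma wF_mono (k : ℕ) (hk : 1 ≤ k) : StrictMono (wF k) := by
  apply strictMono_nat_of_lt_succ
  intro j
  unfold wF; split_ifs <;> first | contradiction | omega

lemma key (k j y : ℕ) (hk : 1 ≤ k) (hj : j ≤ k+2) (hy : y < 4*k+8) :
    2*y+3+sigF k y = wF k j ↔ (AF k j ≤ y ∧ y ≤ BF k j) := by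
  unfold sigF wF AF BF
  split_ifs <;> first | contradiction | omega

lemma cover (k y : ℕ) (hk : 1 ≤ k) (hy : y < 4*k+8) :
    ∃ j, j ≤ k+2 ∧ AF k j ≤ y ∧ y ≤ BF k j := by
  refine ⟨if y ≤ 3 then 0 else if y ≤ 5 then 1 else if y ≤ 4*k+1 then (y+2)/4
    else if y ≤ 4*k+3 then k+1 else k+2, ?_⟩
  unfold AF BF
  split_ifs <;> first | contradiction | omega

lemma BF_le (k j : ℕ) : BF k j ≤ 4*k+7 := by
  unfold BF; split_ifs <;> first | contradiction | omega

def gF (x m s i : ℕ) : ℕ :=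
  if i ≤ 1 then x+1 else if i = 2 then s+1 else if i % 2 = 1 then x+1 else m - x

lemma gF_sum (x m s : ℕ) (hx : x < m) (q : ℕ) :
    ∑ i ∈ Finset.range (2*q+3), gF x m s i = 2*x+3+s + q*(m+1) := by
  induction q with
  | zero =>
    rw [show 2*0+3 = 3 from rfl, Finset.sum_range_succ, Finset.sum_range_succ,
      Finset.sum_range_one]
    unfold gF; split_ifs <;> first | contradiction | omega
  | succ q ih =>
    rw [show 2*(q+1)+3 = (2*q+3)+1+1 by ring, Finset.sum_range_succ,
      Finset.sum_range_succ, ih]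
    have hA : gF x m s (2*q+3) = x+1 := by
      unfold gF; split_ifs <;> first | contradiction | omega
    have hB : gF x m s (2*q+3+1) = m - x := by
      unfold gF; split_ifs <;> first | contradiction | omega
    rw [hA, hB, add_one_mul]
    omega

def profile (M n : ℕ) (e : Fin M ≃ Fin M) : Fin n → (Fin M ≃ Fin M) :=
  fun i => if (i : ℕ) ≤ 1 then Equiv.refl _ else if (i : ℕ) = 2 then e
    else if (i : ℕ) % 2 = 1 then Equiv.refl _ else Fin.revPerm

lemma profile_apply (M n : ℕ) (e : Fin M ≃ Fin M) (i : Fin n) (x : Fin M) :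
    ((profile M n e i) x : ℕ) + 1 = gF x.val M ((e x) : ℕ) i.val := by
  have hx := x.isLt
  unfold profile gF
  split_ifs <;>
    simp only [Equiv.refl_apply, Fin.revPerm_apply, Fin.val_rev] <;> omega

lemma borda_profile (M n q : ℕ) (hn : n = 2*q+3) (e : Fin M ≃ Fin M) (x : Fin M) :
    bordaScore (profile M n e) x = 2*x.val+3+((e x) : ℕ) + q*(M+1) := by
  unfold bordaScore
  calc ∑ i : Fin n, (((profile M n e i) x : ℕ) + 1)
      = ∑ i : Fin n, gF x.val M ((e x) : ℕ) i.val :=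
        Finset.sum_congr rfl (fun i _ => profile_apply M n e i x)
    _ = ∑ i ∈ Finset.range n, gF x.val M ((e x) : ℕ) i :=
        Fin.sum_univ_eq_sum_range _ _
    _ = 2*x.val+3+((e x) : ℕ) + q*(M+1) := by
        rw [hn]; exact gF_sum _ _ _ x.isLt q

lemma card_val_interval (M a b : ℕ) (hb : b < M) :
    (Finset.univ.filter (fun x : Fin M => a ≤ x.val ∧ x.val ≤ b)).card = b + 1 - a := by
  rw [← Nat.card_Icc a b]
  apply Finset.card_bij (fun x _ => x.val)
  · intro x hx
    simp only [Finset.mem_filter, Finset.mem_univ, true_and] at hx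
    simpa only [Finset.mem_Icc] using hx
  · intro x hx y hy hxy
    exact Fin.ext hxy
  · intro y hy
    simp only [Finset.mem_Icc] at hy
    refine ⟨⟨y, by omega⟩, ?_, rfl⟩
    simp only [Finset.mem_filter, Finset.mem_univ, true_and]
    exact hy

lemma get_p (k j : ℕ) (hk : 1 ≤ k) (hj : j < k+3)
    (h : j < ([4,2] ++ List.replicate (k-1) 4 ++ [2,4]).length) :
    ([4,2] ++ List.replicate (k-1) 4 ++ [2,4])[j] =
      if j = 0 then 4 else if j = 1 then 2 else if j ≤ k then 4
      else if j = k+1 then 2 else 4 := by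
  rw [List.getElem_eq_iff]
  show (4 :: 2 :: (List.replicate (k-1) 4 ++ [2,4]))[j]? = _
  rcases j with _ | j
  · simp
  rcases j with _ | i
  · simp
  rw [show i+1+1 = (i+1)+1 from rfl, List.getElem?_cons_succ, List.getElem?_cons_succ]
  by_cases hc : i < k-1
  · rw [List.getElem?_append, if_pos (by simpa using hc), List.getElem?_replicate,
      if_pos hc]
    rw [if_neg (by omega : ¬ i+1+1 = 0), if_neg (by omega : ¬ i+1+1 = 1),
      if_pos (by omega : i+1+1 ≤ k)]
  · rw [List.getElem?_append_right (by simpa using hc), List.length_replicate]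
    have hik : i = k-1 ∨ i = k := by omega
    rcases hik with h' | h'
    · rw [h', Nat.sub_self]
      rw [if_neg (by omega : ¬ k-1+1+1 = 0), if_neg (by omega : ¬ k-1+1+1 = 1),
        if_neg (by omega : ¬ k-1+1+1 ≤ k), if_pos (by omega : k-1+1+1 = k+1)]
      rfl
    · rw [h', show k - (k-1) = 1 by omega]
      rw [if_neg (by omega : ¬ k+1+1 = 0), if_neg (by omega : ¬ k+1+1 = 1),
        if_neg (by omega : ¬ k+1+1 ≤ k), if_neg (by omega : ¬ k+1+1 = k+1)]
      rfl

theorem stmt13 (n : ℕ) (hn : Odd n) (hn3 : 3 ≤ n) (k : ℕ) (hk : 1 ≤ k) :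
    InBordaRange n ([4, 2] ++ List.replicate (k - 1) 4 ++ [2, 4]) := by
  obtain ⟨q, hq⟩ : ∃ q, n = 2*q+3 := by
    obtain ⟨r, hr⟩ := hn; exact ⟨r - 1, by omega⟩
  unfold InBordaRange
  have hm : ([4, 2] ++ List.replicate (k - 1) 4 ++ [2, 4]).sum = 4*k+8 := by
    simp [List.sum_append, List.sum_replicate]; omega
  have hlen : ([4, 2] ++ List.replicate (k - 1) 4 ++ [2, 4]).length = k+3 := by
    simp [List.length_append, List.length_replicate]; omega
  have hsig_lt : ∀ y : Fin ([4, 2] ++ List.replicate (k - 1) 4 ++ [2, 4]).sum,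
      sigF k y.val < ([4, 2] ++ List.replicate (k - 1) 4 ++ [2, 4]).sum := by
    intro y
    have hy := y.isLt
    have h2 : sigF k y.val < 4*k+8 := sig_lt k y.val hk (by omega)
    omega
  have hinj : Function.Injective
      (fun y : Fin ([4, 2] ++ List.replicate (k - 1) 4 ++ [2, 4]).sum =>
        (⟨sigF k y.val, hsig_lt y⟩ : Fin ([4, 2] ++ List.replicate (k - 1) 4 ++ [2, 4]).sum)) := by
    intro a b hab
    have h1 := a.isLt; have h2 := b.isLt
    exact Fin.ext (sig_inj k a.val b.val hk (by omega) (by omega) (congrArg Fin.val hab))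
  let e := Equiv.ofBijective _ (Finite.injective_iff_bijective.mp hinj)
  have he : ∀ y, ((e y) : ℕ) = sigF k y.val := fun y => rfl
  have hscore : ∀ x, bordaScore (profile ([4, 2] ++ List.replicate (k - 1) 4 ++ [2, 4]).sum n e) x
      = 2*x.val+3+sigF k x.val + q*(([4, 2] ++ List.replicate (k - 1) 4 ++ [2, 4]).sum+1) := by
    intro x
    rw [borda_profile _ n q hq e x, he]
  refine ⟨profile _ n e, fun j => wF k j.val + q*(([4, 2] ++ List.replicate (k - 1) 4 ++ [2, 4]).sum+1),
    ?_, ?_, ?_⟩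
  · intro a b hab
    exact Nat.add_lt_add_right (wF_mono k hk hab) _
  · intro x
    have hx : x.val < 4*k+8 := by have := x.isLt; omega
    obtain ⟨j, hj, hA, hB⟩ := cover k x.val hk hx
    refine ⟨⟨j, by omega⟩, ?_⟩
    rw [hscore x]
    congr 1
    exact (key k j x.val hk hj hx).mpr ⟨hA, hB⟩
  · intro j
    have hJ : j.val < k+3 := by have := j.isLt; omega
    have hpred : ∀ x : Fin ([4, 2] ++ List.replicate (k - 1) 4 ++ [2, 4]).sum,
        bordaScore (profile _ n e) x
            = wF k j.val + q*(([4, 2] ++ List.replicate (k - 1) 4 ++ [2, 4]).sum+1)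
          ↔ (AF k j.val ≤ x.val ∧ x.val ≤ BF k j.val) := by
      intro x
      have hx : x.val < 4*k+8 := by have := x.isLt; omega
      rw [hscore x, Nat.add_right_cancel_iff]
      exact key k j.val x.val hk (by omega) hx
    rw [Finset.filter_congr (fun x _ => hpred x)]
    rw [card_val_interval _ _ _ (by have := BF_le k j.val; omega)]
    rw [List.get_eq_getElem, get_p k j.val hk hJ (by omega)]
    unfold AF BF
    split_ifs <;> first | contradiction | omega
end

section
/- If every entry of the pattern (m_1,...,m_T) equals 2 or 4 and the number of entries equal to 2 is odd, then (m_1,...,m_T) is not in the Borda range for any odd number n of voters. -/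
lemma sum_mod_four (p : List ℕ) (h : ∀ x ∈ p, x = 2 ∨ x = 4) :
    p.sum % 4 = (2 * p.count 2) % 4 := by
  induction p with
  | nil => simp
  | cons a t ih =>
    have ha := h a List.mem_cons_self
    have ht := ih (fun x hx => h x (List.mem_cons_of_mem _ hx))
    rcases ha with rfl | rfl <;> simp [List.count_cons] <;> omega

theorem stmt15 (p : List ℕ) (h24 : ∀ x ∈ p, x = 2 ∨ x = 4)
    (hodd : Odd (p.count 2)) (n : ℕ) (hn : Odd n) :
    ¬ InBordaRange n p := by
  rintro ⟨u, scores, hmono, hcover, hcard⟩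
  have hm4 : p.sum % 4 = 2 := by
    have := sum_mod_four p h24
    obtain ⟨k, hk⟩ := hodd
    omega
  obtain ⟨c, hc⟩ : ∃ c, p.sum = 2 * c := ⟨p.sum / 2, by omega⟩
  have hcodd : Odd c := by rw [Nat.odd_iff]; omega
  set S : ℕ := ∑ k : Fin p.sum, ((k : ℕ) + 1) with hS
  have hS2 : S * 2 = (p.sum + 1) * p.sum := by
    have h1 : S = ∑ k ∈ Finset.range p.sum, (k + 1) :=
      Fin.sum_univ_eq_sum_range (fun k => k + 1) p.sum
    have h2 : ∑ k ∈ Finset.range (p.sum + 1), k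
        = ∑ k ∈ Finset.range p.sum, (k + 1) := by
      rw [Finset.sum_range_succ' (fun i => i) p.sum]; simp
    rw [h1, ← h2, Finset.sum_range_id_mul_two]
    simp
  have hSodd : Odd S := by
    have hval : S = (2 * c + 1) * c := by
      have h2 : S * 2 = ((2 * c + 1) * c) * 2 := by rw [hS2, hc]; ring
      exact Nat.eq_of_mul_eq_mul_right (by norm_num) h2
    rw [hval]
    exact Odd.mul ⟨c, by ring⟩ hcodd
  have htotal : ∑ x, bordaScore u x = n * S := by
    unfold bordaScore
    rw [Finset.sum_comm]
    rw [Finset.sum_congr rfl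
      (fun i _ => Equiv.sum_comp (u i) (fun k : Fin p.sum => (k : ℕ) + 1))]
    simp [hS, mul_comm]
  have hgspec : ∀ x, bordaScore u x = scores (hcover x).choose :=
    fun x => (hcover x).choose_spec
  have hfilter : ∀ j, (Finset.univ.filter (fun x => bordaScore u x = scores j))
      = Finset.univ.filter (fun x => (hcover x).choose = j) := by
    intro j
    ext x
    simp only [Finset.mem_filter, Finset.mem_univ, true_and]
    constructor
    · intro hx
      exact hmono.injective (by rw [← hgspec x, hx])
    · intro hx
      rw [hgspec x, hx]
  have hfib : ∑ x, bordaScore u x = ∑ j, scores j * p.get j := by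
    rw [← Finset.sum_fiberwise Finset.univ (fun x => (hcover x).choose)
      (bordaScore u)]
    refine Finset.sum_congr rfl (fun j _ => ?_)
    have hconst : ∀ x ∈ Finset.univ.filter (fun x => (hcover x).choose = j),
        bordaScore u x = scores j := by
      intro x hx
      simp only [Finset.mem_filter] at hx
      rw [hgspec x, hx.2]
    rw [Finset.sum_congr rfl hconst, Finset.sum_const, ← hfilter, hcard j,
      smul_eq_mul, mul_comm]
  have heven : Even (∑ j, scores j * p.get j) := by
    refine Finset.even_sum _ (fun j _ => ?_)
    have hpe : Even (p.get j) := by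
      rcases h24 (p.get j) (p.get_mem j) with h2 | h2 <;> rw [h2] <;> decide
    exact hpe.mul_left _
  have hoddt : Odd (∑ x, bordaScore u x) := by
    rw [htotal]; exact hn.mul hSodd
  rw [hfib] at hoddt
  exact (Nat.not_even_iff_odd.mpr hoddt) heven
end
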